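/- Let f be a generator with cdf F(x) := ∫₀ˣ f(t) dt, and define the iterated antiderivatives F^{(0)} := F and F^{(−m)}(x) := ∫₀ˣ F^{(−m+1)}(t) dt for m ≥ 1. Then for every m ∈ ℕ, F^{(−m)}(1) = Σ_{j=0}^m (−1)^j / (j! (m−j)!) · ∫₀¹ x^j f(x) dx; that is, F^{(−m)}(1) = Σ_{j=0}^m (−1)^j E[X^j] / (j!(m−j)!) where X has density f. -/

import Mathlib

open MeasureTheory

/-- A generator: a probability density on `[0,1]`. -/
def IsGenerator (f : ℝ → ℝ) : Prop :=
  Measurable f ∧ (∀ x ∈ Set.Icc (0:ℝ) 1, 0 ≤ f x) ∧ ∫ x in Set.Icc (0:ℝ) 1, f x = 1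

theorem swap_aux (g : ℝ → ℝ) (hmg : Measurable g) (hg : Integrable g)
    (m : ℕ) (x : ℝ) (hx : 0 ≤ x) (hx1 : x ≤ 1) :
    ∫ s in (0:ℝ)..x, ∫ t in (0:ℝ)..s, ((s - t) ^ m / (Nat.factorial m : ℝ)) * g t
      = ∫ t in (0:ℝ)..x, ((x - t) ^ (m + 1) / (Nat.factorial (m + 1) : ℝ)) * g t := by
  set μ : Measure ℝ := volume.restrict (Set.Ioc 0 x) with hμ
  haveI : IsFiniteMeasure μ := ⟨by
    simp only [hμ, Measure.restrict_apply_univ, Real.volume_Ioc]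
    exact ENNReal.ofReal_lt_top⟩
  set K : ℝ → ℝ → ℝ := fun s t => ((s - t) ^ m / (Nat.factorial m : ℝ)) * g t with hK
  set H : ℝ → ℝ → ℝ := fun s t => if t ≤ s then K s t else 0 with hH
  have hKm : Measurable (fun p : ℝ × ℝ => K p.1 p.2) := by
    apply Measurable.mul
    · exact ((measurable_fst.sub measurable_snd).pow_const m).div_const _
    · exact hmg.comp measurable_snd
  have hmeas : Measurable (Function.uncurry H) := by
    have : Function.uncurry H = fun p : ℝ × ℝ => if p.2 ≤ p.1 then K p.1 p.2 else 0 := rfl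
    rw [this]
    exact Measurable.ite (measurableSet_le measurable_snd measurable_fst) hKm measurable_const
  -- integrability on the product
  have hg2 : Integrable (fun p : ℝ × ℝ => g p.2) (μ.prod μ) := by
    rw [MeasureTheory.integrable_prod_iff
      ((show Measurable (fun p : ℝ × ℝ => g p.2) from hmg.comp measurable_snd).aestronglyMeasurable)]
    refine ⟨Filter.Eventually.of_forall fun s => hg.restrict, ?_⟩
    simpa using integrable_const (μ := μ) (∫ y, ‖g y‖ ∂μ)
  have hHi : Integrable (Function.uncurry H) (μ.prod μ) := by
    refine Integrable.mono' ((hg2.abs).const_mul (1 / (Nat.factorial m : ℝ)))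
      hmeas.aestronglyMeasurable ?_
    rw [hμ, Measure.prod_restrict]
    filter_upwards [ae_restrict_mem (measurableSet_Ioc.prod measurableSet_Ioc)] with p hp
    obtain ⟨hp1, hp2⟩ := hp
    simp only [Set.mem_Ioc] at hp1 hp2
    by_cases h : p.2 ≤ p.1
    · have h1 : |p.1 - p.2| ≤ 1 := by
        rw [abs_of_nonneg (by linarith)]; linarith
      have : ‖Function.uncurry H p‖ = |p.1 - p.2| ^ m / (Nat.factorial m : ℝ) * |g p.2| := by
        simp only [Function.uncurry, hH, if_pos h, hK, Real.norm_eq_abs, abs_mul, abs_div,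
          abs_pow, Nat.abs_cast]
      rw [this]
      have hfm : (0:ℝ) < (Nat.factorial m : ℝ) := by positivity
      have h2 : |p.1 - p.2| ^ m ≤ 1 := pow_le_one₀ (abs_nonneg _) h1
      calc |p.1 - p.2| ^ m / (Nat.factorial m : ℝ) * |g p.2|
          ≤ 1 / (Nat.factorial m : ℝ) * |g p.2| := by
            gcongr
        _ = 1 / (Nat.factorial m : ℝ) * |g p.2| := rfl
    · simp only [Function.uncurry, hH, if_neg h, norm_zero]
      positivity
  -- rewrite LHS as a double integral over μ
  have hLHS : ∫ s in (0:ℝ)..x, ∫ t in (0:ℝ)..s, K s t = ∫ s, ∫ t, H s t ∂μ ∂μ := by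
    rw [intervalIntegral.integral_of_le hx]
    apply setIntegral_congr_fun measurableSet_Ioc
    intro s hs
    dsimp only
    rw [intervalIntegral.integral_of_le hs.1.le]
    have heq : (fun t => H s t) = Set.indicator (Set.Iic s) (K s) := by
      funext t; simp [hH, Set.indicator_apply]
    rw [heq, integral_indicator measurableSet_Iic, hμ,
      Measure.restrict_restrict measurableSet_Iic]
    have hset2 : Set.Iic s ∩ Set.Ioc 0 x = Set.Ioc 0 s := by
      ext t
      simp only [Set.mem_inter_iff, Set.mem_Iic, Set.mem_Ioc]
      exact ⟨fun ⟨h1, h2, _⟩ => ⟨h2, h1⟩, fun ⟨h1, h2⟩ => ⟨h2, h1, h2.trans hs.2⟩⟩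
    rw [hset2]
  rw [hLHS, MeasureTheory.integral_integral_swap hHi, intervalIntegral.integral_of_le hx]
  apply setIntegral_congr_fun measurableSet_Ioc
  intro t ht
  dsimp only
  have heq : (fun s => H s t) = Set.indicator (Set.Ici t) (fun s => K s t) := by
    funext s; simp [hH, Set.indicator_apply, Set.mem_Ici]
  rw [heq, integral_indicator measurableSet_Ici, hμ,
    Measure.restrict_restrict measurableSet_Ici]
  have hset : Set.Ici t ∩ Set.Ioc 0 x = Set.Icc t x := by
    ext s
    simp only [Set.mem_inter_iff, Set.mem_Ici, Set.mem_Ioc, Set.mem_Icc]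
    exact ⟨fun ⟨h1, _, h3⟩ => ⟨h1, h3⟩, fun ⟨h1, h2⟩ => ⟨h1, lt_of_lt_of_le ht.1 h1, h2⟩⟩
  rw [hset, integral_Icc_eq_integral_Ioc, ← intervalIntegral.integral_of_le ht.2]
  rw [intervalIntegral.integral_mul_const]
  congr 1
  have hcs := intervalIntegral.integral_comp_sub_right
    (fun u => u ^ m / (Nat.factorial m : ℝ)) t (a := t) (b := x)
  rw [hcs, sub_self, intervalIntegral.integral_div, integral_pow]
  have h0 : (0:ℝ) ^ (m + 1) = 0 := zero_pow (Nat.succ_ne_zero m)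
  rw [h0, sub_zero]
  have hf1 : ((Nat.factorial m : ℝ)) ≠ 0 := by positivity
  have hf2 : ((m : ℝ) + 1) ≠ 0 := by positivity
  rw [Nat.factorial_succ]
  push_cast
  field_simp
  try ring

theorem stmt_10 (f : ℝ → ℝ) (hf : IsGenerator f)
    (F : ℕ → ℝ → ℝ)
    (hF0 : ∀ x, F 0 x = ∫ t in (0:ℝ)..x, f t)
    (hFsucc : ∀ (m : ℕ) (x : ℝ), F (m + 1) x = ∫ t in (0:ℝ)..x, F m t) :
    ∀ m : ℕ, F m 1 = ∑ j ∈ Finset.range (m + 1),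
      (-1 : ℝ) ^ j / ((Nat.factorial j : ℝ) * (Nat.factorial (m - j) : ℝ)) *
        ∫ x in Set.Icc (0:ℝ) 1, x ^ j * f x := by
  obtain ⟨hfm, hfpos, hfint⟩ := hf
  have hInt : IntegrableOn f (Set.Icc (0:ℝ) 1) volume := by
    by_contra h
    rw [MeasureTheory.integral_undef h] at hfint
    norm_num at hfint
  set g : ℝ → ℝ := (Set.Icc (0:ℝ) 1).indicator f with hg
  have hmg : Measurable g := hfm.indicator measurableSet_Icc
  have hgi : Integrable g := (integrable_indicator_iff measurableSet_Icc).2 hInt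
  have hgf : ∀ t ∈ Set.Icc (0:ℝ) 1, g t = f t := fun t ht => Set.indicator_of_mem ht f
  -- Cauchy formula for repeated integration
  have key : ∀ m : ℕ, ∀ x ∈ Set.Icc (0:ℝ) 1,
      F m x = ∫ t in (0:ℝ)..x, ((x - t) ^ m / (Nat.factorial m : ℝ)) * g t := by
    intro m
    induction m with
    | zero =>
      intro x hx
      rw [hF0]
      apply intervalIntegral.integral_congr
      intro t ht
      rw [Set.uIcc_of_le hx.1] at ht
      have ht1 : t ∈ Set.Icc (0:ℝ) 1 := ⟨ht.1, ht.2.trans hx.2⟩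
      simp [hgf t ht1]
    | succ m ih =>
      intro x hx
      rw [hFsucc]
      rw [show (∫ s in (0:ℝ)..x, F m s)
          = ∫ s in (0:ℝ)..x, ∫ t in (0:ℝ)..s, ((s - t) ^ m / (Nat.factorial m : ℝ)) * g t from
        intervalIntegral.integral_congr (fun s hs => by
          rw [Set.uIcc_of_le hx.1] at hs
          exact ih s ⟨hs.1, hs.2.trans hx.2⟩)]
      exact swap_aux g hmg hgi m x hx.1 hx.2
  intro m
  have h1 : F m 1 = ∫ t in Set.Icc (0:ℝ) 1, ((1 - t) ^ m / (Nat.factorial m : ℝ)) * f t := by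
    rw [key m 1 ⟨zero_le_one, le_refl 1⟩, intervalIntegral.integral_of_le zero_le_one,
      ← integral_Icc_eq_integral_Ioc]
    apply setIntegral_congr_fun measurableSet_Icc
    intro t ht
    simp [hgf t ht]
  rw [h1]
  -- expand the binomial
  have hpt : ∀ t : ℝ, ((1 - t) ^ m / (Nat.factorial m : ℝ)) * f t
      = ∑ j ∈ Finset.range (m + 1),
        (-1 : ℝ) ^ j / ((Nat.factorial j : ℝ) * (Nat.factorial (m - j) : ℝ)) * (t ^ j * f t) := by
    intro t
    have hb : (1 - t) ^ m = ∑ j ∈ Finset.range (m + 1),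
        (-t) ^ j * 1 ^ (m - j) * (Nat.choose m j : ℝ) := by
      rw [show (1 - t : ℝ) = -t + 1 by ring, add_pow]
    rw [hb, Finset.sum_div, Finset.sum_mul]
    apply Finset.sum_congr rfl
    intro j hj
    have hjm : j ≤ m := Nat.lt_succ_iff.mp (Finset.mem_range.mp hj)
    have hfact : (Nat.choose m j : ℝ) * (Nat.factorial j : ℝ) * (Nat.factorial (m - j) : ℝ)
        = (Nat.factorial m : ℝ) := by
      exact_mod_cast congrArg (Nat.cast : ℕ → ℝ) (Nat.choose_mul_factorial_mul_factorial hjm)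
    have h1 : ((Nat.factorial m : ℝ)) ≠ 0 := by positivity
    have h2 : ((Nat.factorial j : ℝ)) ≠ 0 := by positivity
    have h3 : ((Nat.factorial (m - j) : ℝ)) ≠ 0 := by positivity
    rw [neg_pow, one_pow]
    field_simp
    linear_combination (t ^ j * f t) * hfact
  rw [show (∫ t in Set.Icc (0:ℝ) 1, ((1 - t) ^ m / (Nat.factorial m : ℝ)) * f t)
      = ∫ t in Set.Icc (0:ℝ) 1, ∑ j ∈ Finset.range (m + 1),
          (-1 : ℝ) ^ j / ((Nat.factorial j : ℝ) * (Nat.factorial (m - j) : ℝ)) * (t ^ j * f t)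
    from setIntegral_congr_fun measurableSet_Icc fun t _ => hpt t]
  rw [MeasureTheory.integral_finset_sum]
  · apply Finset.sum_congr rfl
    intro j _
    rw [MeasureTheory.integral_const_mul]
  · intro j _
    apply Integrable.const_mul
    apply Integrable.bdd_mul (c := 1) hInt
    · exact (measurable_id.pow_const j).aestronglyMeasurable
    · filter_upwards [ae_restrict_mem measurableSet_Icc] with t ht
      rw [Real.norm_eq_abs, abs_pow]
      apply pow_le_one₀ (abs_nonneg _)
      rw [abs_le]; exact ⟨by linarith [ht.1], ht.2⟩
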